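/- Let γ be a parameter and define P(u₋₁,u,u₁,u₂) := (u₂+u)(u₁−u₋₁)/2 − u₂u − u₁u₋₁ − γ²(u₋₁+u+u₁+u₂) + 3γ⁴ and H(u,u₁) := (u₁−u)² − 2γ²(u₁+u) + γ⁴. Then there is a nonzero constant k such that k·H(u,u₁) = (∂P/∂u₋₁)(∂P/∂u₂) − (∂²P/∂u₋₁∂u₂)·P identically in all four variables, and P satisfies P(u₋₁,u,u₁,u₂)=P(u₂,u₁,u,u₋₁)=P(u₁,u,u₋₁,u₂). -/

import Mathlib

open MvPolynomial

lemma stmt8_pd3 (γ : ℝ) :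
    pderiv 3 (C (1 / 2) * (X 3 + X 1) * (X 2 + X 0) - X 3 * X 1 - X 2 * X 0
        - C (γ ^ 2) * ((X 0 : MvPolynomial (Fin 4) ℝ) + X 1 + X 2 + X 3) + C (3 * γ ^ 4))
    = C (1 / 2) * (X 2 + X 0) - X 1 - C (γ ^ 2) := by
  simp [pderiv_mul, pderiv_X_self, pderiv_X_of_ne, pderiv_C]
  ring

lemma stmt8_pd0 (γ : ℝ) :
    pderiv 0 (C (1 / 2) * (X 3 + X 1) * (X 2 + X 0) - X 3 * X 1 - X 2 * X 0
        - C (γ ^ 2) * ((X 0 : MvPolynomial (Fin 4) ℝ) + X 1 + X 2 + X 3) + C (3 * γ ^ 4))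
    = C (1 / 2) * (X 3 + X 1) - X 2 - C (γ ^ 2) := by
  simp [pderiv_mul, pderiv_X_self, pderiv_X_of_ne, pderiv_C]

lemma stmt8_pd03 (γ : ℝ) :
    pderiv (0 : Fin 4) ((C (1 / 2) : MvPolynomial (Fin 4) ℝ) * (X 2 + X 0) - X 1 - C (γ ^ 2))
    = C (1 / 2) := by
  simp [pderiv_mul, pderiv_X_self, pderiv_X_of_ne, pderiv_C]

/-- The rational-case polynomials (Qut-rat), in the symmetrized form
P = (u₂+u)(u₁+u₋₁)/2 − u₂u − u₁u₋₁ − γ²(u₋₁+u+u₁+u₂) + 3γ⁴,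
H = (u₁−u)² − 2γ²(u₁+u) + γ⁴: P has the square symmetries and
const·H = ∂₋₁(P)·∂₂(P) − ∂₋₁∂₂(P)·P.  Variables: u₋₁ = X 0, u = X 1,
u₁ = X 2, u₂ = X 3. -/
theorem stmt8 (γ : ℝ) (P H : MvPolynomial (Fin 4) ℝ)
    (hP : P = C (1 / 2) * (X 3 + X 1) * (X 2 + X 0) - X 3 * X 1 - X 2 * X 0
        - C (γ ^ 2) * (X 0 + X 1 + X 2 + X 3) + C (3 * γ ^ 4))
    (hH : H = (X 2 - X 1) ^ 2 - C (2 * γ ^ 2) * (X 2 + X 1) + C (γ ^ 4)) :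
    (∃ k : ℝ, k ≠ 0 ∧
      C k * H = pderiv 0 P * pderiv 3 P - pderiv 0 (pderiv 3 P) * P) ∧
    rename (![3, 2, 1, 0] : Fin 4 → Fin 4) P = P ∧
    rename (![2, 1, 0, 3] : Fin 4 → Fin 4) P = P := by
  subst hP hH
  refine ⟨⟨-(1/2), by norm_num, ?_⟩, ?_, ?_⟩
  · rw [stmt8_pd3, stmt8_pd0, stmt8_pd03]
    apply MvPolynomial.funext
    intro x
    simp only [map_add, map_sub, map_mul, map_pow, eval_C, eval_X, map_neg]
    ring
  · simp only [map_add, map_sub, map_mul, rename_X, rename_C]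
    norm_num [Matrix.cons_val_zero, Matrix.cons_val_one, Matrix.head_cons]
    simp only [Matrix.cons_val]
    ring
  · simp only [map_add, map_sub, map_mul, rename_X, rename_C]
    norm_num [Matrix.cons_val_zero, Matrix.cons_val_one, Matrix.head_cons]
    simp only [Matrix.cons_val]
    ring
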